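/- Let N ≥ 1, let K be a real N×N matrix, and for each index i ∈ {1,…,N} let S_i ⊆ {1,…,N} be a set with i ∈ S_i such that K_{ij} = 0 whenever j ∉ S_i. Define Θ_i = { j ≠ i : S_i ∩ S_j ≠ ∅ }. Suppose there exist ψ_1,…,ψ_N > 0 and γ_max ∈ (0,1) such that for every i: ψ_i + √(ψ_i) · ∑_{j∈Θ_i} √(ψ_j) ≤ γ_max, and ∑_{j=1}^N K_{ij}² ≤ ψ_i (the squared Euclidean norm of row i of K is at most ψ_i). Then every eigenvalue of the symmetric positive semidefinite matrix K Kᵀ is at most γ_max; in particular the largest singular value of K satisfies γ(K) ≤ √γ_max < 1. -/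

import Mathlib

set_option synthInstance.maxHeartbeats 400000
set_option maxHeartbeats 1000000


open Finset Matrix
open scoped RealInnerProductSpace

/-- Quadratic form bound for a real hermitian matrix whose eigenvalues are all `≤ γ`. -/
lemma quad_aux {N : ℕ} (M : Matrix (Fin N) (Fin N) ℝ) (hM : M.IsHermitian) (γ : ℝ)
    (h : ∀ μ : ℝ, Module.End.HasEigenvalue (Matrix.toLin' M) μ → μ ≤ γ)
    (x : EuclideanSpace ℝ (Fin N)) :
    ⟪x, Matrix.toEuclideanLin M x⟫ ≤ γ * ⟪x, x⟫ := by
  have hn : Module.finrank ℝ (EuclideanSpace ℝ (Fin N)) = N := by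
    simp [finrank_euclideanSpace]
  have hS := (Matrix.isHermitian_iff_isSymmetric.1 hM)
  set b := hS.eigenvectorBasis hn with hb
  set μ := hS.eigenvalues hn with hμ
  have hev : ∀ i, μ i ≤ γ := by
    intro i
    apply h
    obtain ⟨v, hv, hv0⟩ := (hS.hasEigenvalue_eigenvalues hn i).exists_hasEigenvector
    have hvv := Module.End.mem_eigenspace_iff.1 hv
    have hv' : Matrix.toLin' M ((WithLp.equiv 2 (Fin N → ℝ)) v)
        = μ i • ((WithLp.equiv 2 (Fin N → ℝ)) v) := by
      have := congrArg (WithLp.equiv 2 (Fin N → ℝ)) hvv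
      simpa using this
    refine Module.End.hasEigenvalue_of_hasEigenvector
      (x := (WithLp.equiv 2 (Fin N → ℝ)) v) ⟨Module.End.mem_eigenspace_iff.2 hv', ?_⟩
    intro h0
    apply hv0
    apply (WithLp.equiv 2 (Fin N → ℝ)).injective
    simpa using h0
  have hx : ∀ y : EuclideanSpace ℝ (Fin N), ⟪x, y⟫ = ∑ i, b.repr x i * b.repr y i := by
    intro y
    rw [← b.repr.inner_map_map x y]
    simp only [PiLp.inner_apply, RCLike.inner_apply, starRingEnd_apply, star_trivial]
    exact Finset.sum_congr rfl fun i _ => mul_comm _ _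
  calc ⟪x, Matrix.toEuclideanLin M x⟫
      = ∑ i, b.repr x i * (μ i * b.repr x i) := by
        rw [hx]
        refine Finset.sum_congr rfl fun i _ => ?_
        rw [hb, hμ, hS.eigenvectorBasis_apply_self_apply hn x i]
        norm_num
    _ ≤ ∑ i, γ * (b.repr x i * b.repr x i) := by
        refine Finset.sum_le_sum fun i _ => ?_
        have h1 := hev i
        nlinarith [mul_self_nonneg (b.repr x i)]
    _ = γ * ⟪x, x⟫ := by rw [hx x, Finset.mul_sum]

/-- Decentralized sufficient condition for the spectral norm bound: if each row `i` of `K`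
is supported on `S i ∋ i`, `Θ i = {j ≠ i : S i ∩ S j ≠ ∅}`, and there are `ψ i > 0` with
`ψ i + √(ψ i) ∑_{j ∈ Θ i} √(ψ j) ≤ γ_max < 1` and `‖row i of K‖² ≤ ψ i`, then every
eigenvalue of `K Kᵀ` is at most `γ_max` and the largest singular value of `K`
(its ℓ²-operator norm) is at most `√γ_max < 1`. -/
theorem stmt_2 (N : ℕ) (hN : 1 ≤ N) (K : Matrix (Fin N) (Fin N) ℝ)
    (S : Fin N → Finset (Fin N)) (hself : ∀ i, i ∈ S i)
    (hsupp : ∀ i j, j ∉ S i → K i j = 0)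
    (ψ : Fin N → ℝ) (hψpos : ∀ i, 0 < ψ i)
    (γmax : ℝ) (hγ0 : 0 < γmax) (hγ1 : γmax < 1)
    (hconstr : ∀ i, ψ i + Real.sqrt (ψ i) *
      ∑ j ∈ univ.filter (fun j => j ≠ i ∧ (S i ∩ S j).Nonempty), Real.sqrt (ψ j) ≤ γmax)
    (hrow : ∀ i, ∑ j, (K i j) ^ 2 ≤ ψ i) :
    (∀ μ : ℝ, Module.End.HasEigenvalue (Matrix.toLin' (K * Kᵀ)) μ → μ ≤ γmax) ∧
      ‖Matrix.toEuclideanCLM (𝕜 := ℝ) K‖ ≤ Real.sqrt γmax ∧ Real.sqrt γmax < 1 := by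
  classical
  -- Part 1: Gershgorin
  have h1 : ∀ μ : ℝ, Module.End.HasEigenvalue (Matrix.toLin' (K * Kᵀ)) μ → μ ≤ γmax := by
    intro μ hμ
    obtain ⟨k, hk⟩ := eigenvalue_mem_ball hμ
    rw [Metric.mem_closedBall, Real.dist_eq] at hk
    have hdiag : (K * Kᵀ) k k = ∑ j, (K k j) ^ 2 := by
      simp [Matrix.mul_apply, sq]
    have hoff : ∀ j, j ≠ k →
        ‖(K * Kᵀ) k j‖ ≤ (if (S k ∩ S j).Nonempty then Real.sqrt (ψ k) * Real.sqrt (ψ j) else 0) := by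
      intro j hj
      by_cases hne : (S k ∩ S j).Nonempty
      · simp only [hne, if_true]
        have hcs : ((K * Kᵀ) k j) ^ 2 ≤ (∑ l, (K k l) ^ 2) * ∑ l, (K j l) ^ 2 := by
          have : (K * Kᵀ) k j = ∑ l, K k l * K j l := by simp [Matrix.mul_apply]
          rw [this]
          exact Finset.sum_mul_sq_le_sq_mul_sq _ _ _
        have h2 : ((K * Kᵀ) k j) ^ 2 ≤ ψ k * ψ j :=
          hcs.trans (mul_le_mul (hrow k) (hrow j)
            (Finset.sum_nonneg fun l _ => sq_nonneg _) (hψpos k).le)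
        rw [Real.norm_eq_abs, ← Real.sqrt_sq_eq_abs, ← Real.sqrt_mul (hψpos k).le]
        exact Real.sqrt_le_sqrt h2
      · have hz : (K * Kᵀ) k j = 0 := by
          rw [Matrix.mul_apply]
          refine Finset.sum_eq_zero fun l _ => ?_
          by_cases hl : l ∈ S k
          · have hl' : l ∉ S j := fun hlj => hne ⟨l, Finset.mem_inter.2 ⟨hl, hlj⟩⟩
            simp [Matrix.transpose_apply, hsupp j l hl']
          · simp [hsupp k l hl]
        simp [hz, hne]
    have hsum : ∑ j ∈ univ.erase k, ‖(K * Kᵀ) k j‖ ≤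
        Real.sqrt (ψ k) *
          ∑ j ∈ univ.filter (fun j => j ≠ k ∧ (S k ∩ S j).Nonempty), Real.sqrt (ψ j) := by
      calc ∑ j ∈ univ.erase k, ‖(K * Kᵀ) k j‖
          ≤ ∑ j ∈ univ.erase k,
            (if (S k ∩ S j).Nonempty then Real.sqrt (ψ k) * Real.sqrt (ψ j) else 0) :=
            Finset.sum_le_sum fun j hj => hoff j (Finset.mem_erase.1 hj).1
        _ = ∑ j ∈ (univ.erase k).filter (fun j => (S k ∩ S j).Nonempty),
              Real.sqrt (ψ k) * Real.sqrt (ψ j) := (Finset.sum_filter _ _).symm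
        _ = ∑ j ∈ univ.filter (fun j => j ≠ k ∧ (S k ∩ S j).Nonempty),
              Real.sqrt (ψ k) * Real.sqrt (ψ j) := by
            congr 1
            ext j
            simp [Finset.mem_erase, and_comm]
        _ = Real.sqrt (ψ k) *
              ∑ j ∈ univ.filter (fun j => j ≠ k ∧ (S k ∩ S j).Nonempty), Real.sqrt (ψ j) := by
            rw [Finset.mul_sum]
    have hμle : μ - (K * Kᵀ) k k ≤ ∑ j ∈ univ.erase k, ‖(K * Kᵀ) k j‖ :=
      (le_abs_self _).trans hk
    have := hconstr k
    have := hrow k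
    rw [hdiag] at hμle
    linarith
  refine ⟨h1, ?_, ?_⟩
  · -- Norm bound
    have hKt : Kᵀ = star K := by
      ext i j
      simp [Matrix.star_apply]
    have hM : (K * Kᵀ).IsHermitian := by
      rw [hKt]
      exact Matrix.isHermitian_mul_conjTranspose_self K
    have hadjCLM : ContinuousLinearMap.adjoint (Matrix.toEuclideanCLM (𝕜 := ℝ) K)
        = Matrix.toEuclideanCLM (𝕜 := ℝ) Kᵀ := by
      symm
      rw [ContinuousLinearMap.eq_adjoint_iff]
      intro x y
      have h1 : (Matrix.toEuclideanCLM (𝕜 := ℝ) Kᵀ) x = Matrix.toEuclideanLin Kᵀ x := by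
        rw [← Matrix.coe_toEuclideanCLM_eq_toEuclideanLin]; rfl
      have h2 : (Matrix.toEuclideanCLM (𝕜 := ℝ) K) y = Matrix.toEuclideanLin K y := by
        rw [← Matrix.coe_toEuclideanCLM_eq_toEuclideanLin]; rfl
      rw [h1, h2, show Kᵀ = Kᴴ from by ext i j; simp [Matrix.conjTranspose_apply],
        Matrix.toEuclideanLin_conjTranspose_eq_adjoint, LinearMap.adjoint_inner_left]
    have hnormeq : ‖Matrix.toEuclideanCLM (𝕜 := ℝ) K‖
        = ‖Matrix.toEuclideanCLM (𝕜 := ℝ) Kᵀ‖ := by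
      rw [← hadjCLM]
      exact (ContinuousLinearMap.adjoint.norm_map _).symm
    rw [hnormeq]
    refine ContinuousLinearMap.opNorm_le_bound _ (Real.sqrt_nonneg _) fun x => ?_
    have hq := quad_aux (K * Kᵀ) hM γmax h1 x
    have hadj : Matrix.toEuclideanLin Kᵀ = LinearMap.adjoint (Matrix.toEuclideanLin K) := by
      rw [show Kᵀ = Kᴴ from by ext i j; simp [Matrix.conjTranspose_apply]]
      exact Matrix.toEuclideanLin_conjTranspose_eq_adjoint K
    have happ : (Matrix.toEuclideanCLM (𝕜 := ℝ) Kᵀ) x = Matrix.toEuclideanLin Kᵀ x := by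
      rw [← Matrix.coe_toEuclideanCLM_eq_toEuclideanLin]
      rfl
    have hmul : Matrix.toEuclideanLin (K * Kᵀ) x
        = Matrix.toEuclideanLin K (Matrix.toEuclideanLin Kᵀ x) := by
      simp [Matrix.toEuclideanLin_apply, Matrix.mulVec_mulVec]
    have hxq : ‖Matrix.toEuclideanCLM (𝕜 := ℝ) Kᵀ x‖ ^ 2
        = ⟪x, Matrix.toEuclideanLin (K * Kᵀ) x⟫ := by
      rw [← real_inner_self_eq_norm_sq, happ, hmul, hadj, LinearMap.adjoint_inner_left]
    have hx2 : ⟪x, x⟫ = ‖x‖ ^ 2 := real_inner_self_eq_norm_sq x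
    have hbound : ‖Matrix.toEuclideanCLM (𝕜 := ℝ) Kᵀ x‖ ^ 2
        ≤ (Real.sqrt γmax * ‖x‖) ^ 2 := by
      rw [hxq, mul_pow, Real.sq_sqrt hγ0.le]
      rw [hx2] at hq
      exact hq
    have h0 : (0:ℝ) ≤ Real.sqrt γmax * ‖x‖ :=
      mul_nonneg (Real.sqrt_nonneg _) (norm_nonneg _)
    nlinarith [norm_nonneg (Matrix.toEuclideanCLM (𝕜 := ℝ) Kᵀ x), h0, hbound]
  · have : Real.sqrt γmax < Real.sqrt 1 := Real.sqrt_lt_sqrt hγ0.le hγ1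
    simpa using this
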